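/- Let T > 0 and n ≥ 1. Let α₀, α₁, …, αₙ : [0,T] → ℝ be continuously differentiable nondecreasing functions with α₀(t) = 0, αₙ(t) = t, α_j(0) = 0 for all j, and α_{j−1}(t) ≤ α_j(t) ≤ t for all j and t ∈ [0,T]. For each i, j ∈ {1,…,n}, let K_{ij} be continuous on the triangle {(t,s) : 0 ≤ s ≤ t ≤ T} with continuous partial derivative ∂K_{ij}(t,s)/∂t, and let f_i : [0,T] → ℝ be differentiable at 0. Suppose continuous functions x₁, …, xₙ : [0,T] → ℝ satisfy, for every t ∈ [0,T] and every i, the system Σ_{j=1}^{n} ∫_{α_{j−1}(t)}^{α_j(t)} K_{ij}(t,s) x_j(s) ds = f_i(t). Then the initial values x_j(0) satisfy the linear algebraic system Σ_{j=1}^{n} K_{ij}(0,0)·(α_j′(0) − α_{j−1}′(0))·x_j(0) = f_i′(0) for every i = 1,…,n. -/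

import Mathlib

open Set intervalIntegral

lemma key_deriv (T : ℝ) (hT : 0 < T) (a b : ℝ → ℝ) (a0 b0 : ℝ)
    (ha : HasDerivWithinAt a a0 (Icc 0 T) 0) (hb : HasDerivWithinAt b b0 (Icc 0 T) 0)
    (ha0 : a 0 = 0) (hb0 : b 0 = 0)
    (hord : ∀ t ∈ Icc (0:ℝ) T, 0 ≤ a t ∧ a t ≤ b t ∧ b t ≤ t)
    (φ : ℝ → ℝ → ℝ)
    (hφ : ContinuousOn (fun p : ℝ × ℝ => φ p.1 p.2)
      {p : ℝ × ℝ | 0 ≤ p.2 ∧ p.2 ≤ p.1 ∧ p.1 ≤ T}) :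
    HasDerivWithinAt (fun t => ∫ s in a t..b t, φ t s) ((b0 - a0) * φ 0 0) (Icc 0 T) 0 := by
  set S : Set (ℝ × ℝ) := {p : ℝ × ℝ | 0 ≤ p.2 ∧ p.2 ≤ p.1 ∧ p.1 ≤ T} with hS
  rw [hasDerivWithinAt_iff_tendsto_slope]
  rw [Metric.tendsto_nhdsWithin_nhds]
  intro ε hε
  set M := |φ 0 0| + 1 with hMdef
  have hM : 0 < M := by positivity
  have hφM : |φ 0 0| ≤ M := by simp [hMdef]
  obtain ⟨δ₁, hδ₁pos, hδ₁⟩ := Metric.continuousWithinAt_iff.mp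
    (hφ (0,0) ⟨le_refl 0, le_refl 0, hT.le⟩) (ε/2) (by positivity)
  have hba : HasDerivWithinAt (fun t => b t - a t) (b0 - a0) (Icc 0 T) 0 := hb.sub ha
  rw [hasDerivWithinAt_iff_tendsto_slope, Metric.tendsto_nhdsWithin_nhds] at hba
  obtain ⟨δ₂, hδ₂pos, hδ₂⟩ := hba (ε/(2*M)) (by positivity)
  refine ⟨min δ₁ δ₂, lt_min hδ₁pos hδ₂pos, ?_⟩
  intro t ht hdist
  obtain ⟨htI, htne⟩ := ht
  have ht0 : 0 < t := lt_of_le_of_ne htI.1 (fun h => htne (by simp [← h]))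
  obtain ⟨hA0, hAB, hBt⟩ := hord t htI
  set A := a t with hAdef
  set B := b t with hBdef
  have hBT : B ≤ T := hBt.trans htI.2
  -- integrability of s ↦ φ t s on [A, B]
  have hcont : ContinuousOn (fun s => φ t s) (Icc A B) := by
    apply hφ.comp (Continuous.continuousOn (by continuity : Continuous fun s : ℝ => (t, s)))
    intro s hs
    exact ⟨hA0.trans hs.1, hs.2.trans hBt, htI.2⟩
  have hint : IntervalIntegrable (fun s => φ t s) MeasureTheory.volume A B := by
    apply ContinuousOn.intervalIntegrable
    rwa [uIcc_of_le hAB]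
  have eq1 : (∫ s in A..B, φ t s) - (B - A) * φ 0 0
      = ∫ s in A..B, (φ t s - φ 0 0) := by
    rw [intervalIntegral.integral_sub hint intervalIntegrable_const,
      intervalIntegral.integral_const, smul_eq_mul]
  have bound1 : |∫ s in A..B, (φ t s - φ 0 0)| ≤ (ε/2) * |B - A| := by
    rw [← Real.norm_eq_abs]
    apply intervalIntegral.norm_integral_le_of_norm_le_const
    intro s hs
    rw [Real.norm_eq_abs, ← Real.dist_eq]
    rw [uIoc_of_le hAB] at hs
    have hs0 : 0 ≤ s := hA0.trans hs.1.le
    have hst : s ≤ t := hs.2.trans hBt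
    have hmem : ((t, s) : ℝ × ℝ) ∈ S := ⟨hs0, hst, htI.2⟩
    have hd : dist ((t, s) : ℝ × ℝ) (0, 0) < δ₁ := by
      rw [Prod.dist_eq]
      have h1 : dist t (0:ℝ) < δ₁ := lt_of_lt_of_le hdist (min_le_left _ _)
      have h2 : dist s (0:ℝ) ≤ dist t 0 := by
        rw [Real.dist_eq, Real.dist_eq]
        simp only [sub_zero]
        rw [abs_of_nonneg hs0, abs_of_nonneg ht0.le]
        exact hst
      exact max_lt h1 (lt_of_le_of_lt h2 h1)
    exact le_of_lt (hδ₁ hmem hd)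
  -- slope of b - a
  have hslope2 : |(B - A) / t - (b0 - a0)| < ε/(2*M) := by
    have := hδ₂ ⟨htI, htne⟩ (lt_of_lt_of_le hdist (min_le_right _ _))
    rw [slope_def_field, Real.dist_eq] at this
    simpa [hb0, ha0] using this
  have hBA : B - A ≤ t := by linarith
  have hBAnn : 0 ≤ B - A := by linarith
  rw [slope_def_field, Real.dist_eq]
  simp only [ha0, hb0, intervalIntegral.integral_same, ← hAdef, ← hBdef]
  have hdecomp : ((∫ s in A..B, φ t s) - 0) / (t - 0) - (b0 - a0) * φ 0 0
      = ((∫ s in A..B, φ t s) - (B - A) * φ 0 0) / t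
        + ((B - A) / t - (b0 - a0)) * φ 0 0 := by
    field_simp [ht0.ne']
    ring
  rw [hdecomp]
  have h1 : |((∫ s in A..B, φ t s) - (B - A) * φ 0 0) / t| ≤ ε/2 := by
    rw [abs_div, abs_of_nonneg ht0.le, div_le_iff₀ ht0, eq1]
    calc |∫ s in A..B, (φ t s - φ 0 0)| ≤ (ε/2) * |B - A| := bound1
      _ ≤ (ε/2) * t := by
          rw [abs_of_nonneg hBAnn]
          exact mul_le_mul_of_nonneg_left hBA (by positivity)
      _ = ε / 2 * t := by ring
  have h2 : |((B - A) / t - (b0 - a0)) * φ 0 0| < ε/2 := by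
    rw [abs_mul]
    calc |(B - A) / t - (b0 - a0)| * |φ 0 0|
        ≤ |(B - A) / t - (b0 - a0)| * M := by
          exact mul_le_mul_of_nonneg_left hφM (abs_nonneg _)
      _ < (ε/(2*M)) * M := by exact mul_lt_mul_of_pos_right hslope2 hM
      _ = ε/2 := by field_simp
  calc |((∫ s in A..B, φ t s) - (B - A) * φ 0 0) / t
        + ((B - A) / t - (b0 - a0)) * φ 0 0|
      ≤ |((∫ s in A..B, φ t s) - (B - A) * φ 0 0) / t|
        + |((B - A) / t - (b0 - a0)) * φ 0 0| := abs_add_le _ _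
    _ < ε/2 + ε/2 := by linarith
    _ = ε := by ring

/-- The initial values `x_j(0)` of a continuous solution of the system of linear
Volterra equations of the first kind
`Σ_j ∫_{α_{j−1}(t)}^{α_j(t)} K_{ij}(t,s) x_j(s) ds = f_i(t)` with kernels
jump-discontinuous along the curves `α_j` (with `α_j(0) = 0`) satisfy the linear
algebraic system `Σ_j K_{ij}(0,0) (α_j′(0) − α_{j−1}′(0)) x_j(0) = f_i′(0)`. -/
theorem volterra_system_initial_values
    (T : ℝ) (hT : 0 < T) (n : ℕ) (hn : 1 ≤ n)
    (α α' : ℕ → ℝ → ℝ)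
    (hα0 : ∀ t, α 0 t = 0)
    (hαn : ∀ t, α n t = t)
    (hαinit : ∀ j ≤ n, α j 0 = 0)
    -- each `α_j` is continuously differentiable on `[0,T]` with derivative `α'_j`
    (hαd : ∀ j ≤ n, ∀ t ∈ Set.Icc (0 : ℝ) T,
      HasDerivWithinAt (α j) (α' j t) (Set.Icc 0 T) t)
    (hα'c : ∀ j ≤ n, ContinuousOn (α' j) (Set.Icc 0 T))
    -- each `α_j` is nondecreasing
    (hαmono : ∀ j ≤ n, MonotoneOn (α j) (Set.Icc 0 T))
    -- `α_{j−1}(t) ≤ α_j(t) ≤ t`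
    (hαord : ∀ j ∈ Finset.Icc 1 n, ∀ t ∈ Set.Icc (0 : ℝ) T,
      α (j - 1) t ≤ α j t ∧ α j t ≤ t)
    (K Kt : ℕ → ℕ → ℝ → ℝ → ℝ)
    -- `K_{ij}` continuous on the triangle `{(t,s) : 0 ≤ s ≤ t ≤ T}`
    (hKc : ∀ i ∈ Finset.Icc 1 n, ∀ j ∈ Finset.Icc 1 n,
      ContinuousOn (fun p : ℝ × ℝ => K i j p.1 p.2)
        {p : ℝ × ℝ | 0 ≤ p.2 ∧ p.2 ≤ p.1 ∧ p.1 ≤ T})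
    -- with partial derivative `∂K_{ij}(t,s)/∂t = Kt_{ij}(t,s)` on the triangle,
    (hKt : ∀ i ∈ Finset.Icc 1 n, ∀ j ∈ Finset.Icc 1 n, ∀ t ∈ Set.Icc (0 : ℝ) T,
      ∀ s, 0 ≤ s → s ≤ t →
        HasDerivWithinAt (fun u => K i j u s) (Kt i j t s) (Set.Icc 0 T) t)
    -- continuous on the triangle
    (hKtc : ∀ i ∈ Finset.Icc 1 n, ∀ j ∈ Finset.Icc 1 n,
      ContinuousOn (fun p : ℝ × ℝ => Kt i j p.1 p.2)
        {p : ℝ × ℝ | 0 ≤ p.2 ∧ p.2 ≤ p.1 ∧ p.1 ≤ T})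
    (f : ℕ → ℝ → ℝ) (f' : ℕ → ℝ)
    -- each `f_i` is (one-sidedly) differentiable at `0` with derivative `f'_i`
    (hf : ∀ i ∈ Finset.Icc 1 n, HasDerivWithinAt (f i) (f' i) (Set.Icc 0 T) 0)
    (x : ℕ → ℝ → ℝ)
    (hx : ∀ j ∈ Finset.Icc 1 n, ContinuousOn (x j) (Set.Icc 0 T))
    -- the system of integral equations
    (hsys : ∀ i ∈ Finset.Icc 1 n, ∀ t ∈ Set.Icc (0 : ℝ) T,
      ∑ j ∈ Finset.Icc 1 n, ∫ s in (α (j - 1) t)..(α j t), K i j t s * x j s = f i t) :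
    ∀ i ∈ Finset.Icc 1 n,
      ∑ j ∈ Finset.Icc 1 n, K i j 0 0 * (α' j 0 - α' (j - 1) 0) * x j 0 = f' i := by
  intro i hi
  have h0mem : (0 : ℝ) ∈ Set.Icc (0 : ℝ) T := ⟨le_refl 0, hT.le⟩
  -- each term has the expected one-sided derivative
  have hterm : ∀ j ∈ Finset.Icc 1 n,
      HasDerivWithinAt (fun t => ∫ s in (α (j - 1) t)..(α j t), K i j t s * x j s)
        ((α' j 0 - α' (j - 1) 0) * (K i j 0 0 * x j 0)) (Set.Icc 0 T) 0 := by
    intro j hj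
    obtain ⟨hj1, hjn⟩ := Finset.mem_Icc.mp hj
    have hj1n : j - 1 ≤ n := le_trans (Nat.sub_le j 1) hjn
    apply key_deriv T hT (α (j - 1)) (α j) (α' (j - 1) 0) (α' j 0)
      (hαd (j - 1) hj1n 0 h0mem) (hαd j hjn 0 h0mem)
      (hαinit (j - 1) hj1n) (hαinit j hjn)
    · intro t ht
      refine ⟨?_, (hαord j hj t ht).1, (hαord j hj t ht).2⟩
      have := hαmono (j - 1) hj1n h0mem ht ht.1
      rwa [hαinit (j - 1) hj1n] at this
    · exact (hKc i hi j hj).mul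
        ((hx j hj).comp continuous_snd.continuousOn
          (fun p hp => ⟨hp.1, hp.2.1.trans hp.2.2⟩))
  -- sum the derivatives
  have hsum : HasDerivWithinAt
      (fun t => ∑ j ∈ Finset.Icc 1 n, ∫ s in (α (j - 1) t)..(α j t), K i j t s * x j s)
      (∑ j ∈ Finset.Icc 1 n, (α' j 0 - α' (j - 1) 0) * (K i j 0 0 * x j 0))
      (Set.Icc 0 T) 0 := HasDerivWithinAt.fun_sum hterm
  -- transfer to f i via the system
  have hfi : HasDerivWithinAt (f i)
      (∑ j ∈ Finset.Icc 1 n, (α' j 0 - α' (j - 1) 0) * (K i j 0 0 * x j 0))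
      (Set.Icc 0 T) 0 := by
    apply hsum.congr
    · intro t ht; exact (hsys i hi t ht).symm
    · exact (hsys i hi 0 h0mem).symm
  -- uniqueness of the one-sided derivative
  have hu : UniqueDiffWithinAt ℝ (Set.Icc (0 : ℝ) T) 0 := (uniqueDiffOn_Icc hT) 0 h0mem
  have := hfi.derivWithin hu
  rw [(hf i hi).derivWithin hu] at this
  rw [this]
  exact Finset.sum_congr rfl (fun j _ => by ring)
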